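/- Every nonconstant maximal solution of the Volterra predator-prey system with initial conditions in the open positive quadrant is periodic: if ε₁, ε₂, γ₁, γ₂ > 0 and (N₁, N₂) is a maximal solution with N₁(0) > 0, N₂(0) > 0 and (N₁(0), N₂(0)) ≠ (ε₂/γ₂, ε₁/γ₁), then the solution is defined for all t ∈ ℝ and there exists T > 0 with N₁(t+T) = N₁(t) and N₂(t+T) = N₂(t) for all t. (Volterra's law of the periodic cycle: the fluctuations of the two species are periodic.) -/

import Mathlib

open Set Metric Real Filter

namespace Volterra

def vf (ε₁ ε₂ γ₁ γ₂ : ℝ) (x : ℝ × ℝ) : ℝ × ℝ :=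
  (x.1 * (ε₁ - γ₁ * x.2), -x.2 * (ε₂ - γ₂ * x.1))

theorem contDiff_vf (ε₁ ε₂ γ₁ γ₂ : ℝ) : ContDiff ℝ 1 (vf ε₁ ε₂ γ₁ γ₂) := by
  unfold vf
  fun_prop

theorem lipschitz_vf (ε₁ ε₂ γ₁ γ₂ : ℝ) (r : ℝ) :
    ∃ K : NNReal, LipschitzOnWith K (vf ε₁ ε₂ γ₁ γ₂) (closedBall 0 r) := by
  have hcd := contDiff_vf ε₁ ε₂ γ₁ γ₂
  have hcont : ContinuousOn (fun x => ‖fderiv ℝ (vf ε₁ ε₂ γ₁ γ₂) x‖) (closedBall 0 r) :=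
    ((hcd.continuous_fderiv one_ne_zero).norm).continuousOn
  obtain ⟨C, hC⟩ := (isCompact_closedBall (0 : ℝ × ℝ) r).exists_bound_of_continuousOn hcont
  refine ⟨⟨max C 0, le_max_right _ _⟩, ?_⟩
  apply (convex_closedBall _ _).lipschitzOnWith_of_nnnorm_hasFDerivWithin_le
    (f' := fun x => fderiv ℝ (vf ε₁ ε₂ γ₁ γ₂) x)
    (fun x _ => ((hcd.differentiable one_ne_zero) x).hasFDerivAt.hasFDerivWithinAt)
  intro x hx
  have := hC x hx
  apply NNReal.coe_le_coe.1
  exact le_trans (by simpa using this) (le_max_left C 0)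


variable {ε₁ ε₂ γ₁ γ₂ : ℝ}

/-- Uniqueness of solutions on an open preconnected set. -/
theorem eqOn_of_isOpen {I : Set ℝ} (hI : IsOpen I) (hIc : IsPreconnected I)
    {f g : ℝ → ℝ × ℝ}
    (hf : ∀ t ∈ I, HasDerivAt f (vf ε₁ ε₂ γ₁ γ₂ (f t)) t)
    (hg : ∀ t ∈ I, HasDerivAt g (vf ε₁ ε₂ γ₁ γ₂ (g t)) t)
    {t₀ : ℝ} (ht₀ : t₀ ∈ I) (heq : f t₀ = g t₀) : EqOn f g I := by
  set U : Set ℝ := {t | t ∈ I ∧ f t = g t} with hU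
  set W : Set ℝ := {t | t ∈ I ∧ f t ≠ g t} with hW
  have hUopen : IsOpen U := by
    rw [isOpen_iff_mem_nhds]
    rintro t₁ ⟨ht₁I, ht₁⟩
    obtain ⟨K, sb, hsb, hlip⟩ := (contDiff_vf ε₁ ε₂ γ₁ γ₂).contDiffAt.exists_lipschitzOnWith
      (x := f t₁)
    have hfc : ContinuousAt f t₁ := (hf t₁ ht₁I).continuousAt
    have hgc : ContinuousAt g t₁ := (hg t₁ ht₁I).continuousAt
    have hev : ∀ᶠ t in nhds t₁,
        (HasDerivAt f (vf ε₁ ε₂ γ₁ γ₂ (f t)) t ∧ f t ∈ sb) ∧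
        (HasDerivAt g (vf ε₁ ε₂ γ₁ γ₂ (g t)) t ∧ g t ∈ sb) := by
      have h1 : ∀ᶠ t in nhds t₁, t ∈ I := hI.mem_nhds ht₁I
      have h2 : ∀ᶠ t in nhds t₁, f t ∈ sb := hfc.eventually_mem hsb
      have h3 : ∀ᶠ t in nhds t₁, g t ∈ sb := by
        have : g t₁ ∈ sb := ht₁ ▸ (mem_of_mem_nhds hsb)
        exact hgc.eventually_mem (ht₁ ▸ hsb)
      filter_upwards [h1, h2, h3] with t h1 h2 h3
      exact ⟨⟨hf t h1, h2⟩, ⟨hg t h1, h3⟩⟩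
    have := ODE_solution_unique_of_eventually (v := fun _ => vf ε₁ ε₂ γ₁ γ₂)
      (s := fun _ => sb) (Filter.Eventually.of_forall fun _ => hlip) (hev.mono fun t h => h.1) (hev.mono fun t h => h.2) ht₁
    filter_upwards [this, hI.mem_nhds ht₁I] with t ht htI
    exact ⟨htI, ht⟩
  have hWopen : IsOpen W := by
    rw [isOpen_iff_mem_nhds]
    rintro t₁ ⟨ht₁I, ht₁⟩
    have hfc : ContinuousAt (fun t => (f t, g t)) t₁ :=
      ((hf t₁ ht₁I).continuousAt.prodMk (hg t₁ ht₁I).continuousAt)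
    have : ∀ᶠ t in nhds t₁, f t ≠ g t := by
      have hne : {p : (ℝ × ℝ) × (ℝ × ℝ) | p.1 ≠ p.2} ∈ nhds ((f t₁, g t₁)) :=
        isOpen_ne_fun continuous_fst continuous_snd |>.mem_nhds ht₁
      exact hfc.eventually_mem hne
    filter_upwards [this, hI.mem_nhds ht₁I] with t ht htI
    exact ⟨htI, ht⟩
  intro t ht
  by_contra hne
  have hsub : I ⊆ U ∪ W := fun z hz => by
    by_cases h : f z = g z
    · exact Or.inl ⟨hz, h⟩
    · exact Or.inr ⟨hz, h⟩
  obtain ⟨z, hz⟩ := hIc U W hUopen hWopen hsub ⟨t₀, ht₀, ht₀, heq⟩ ⟨t, ht, ht, hne⟩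
  exact hz.2.2.2 hz.2.1.2


theorem eqOn_Icc_of_eqOn_Ioo {f g : ℝ → ℝ × ℝ} {a b : ℝ} (hab : a < b)
    (h : EqOn f g (Ioo a b)) (hfc : ContinuousOn f (Icc a b))
    (hgc : ContinuousOn g (Icc a b)) : EqOn f g (Icc a b) := by
  intro t ht
  rcases eq_or_lt_of_le ht.1 with h1 | h1
  · haveI : (nhdsWithin a (Ioo a b)).NeBot := left_nhdsWithin_Ioo_neBot hab
    have hf1 : Filter.Tendsto f (nhdsWithin a (Ioo a b)) (nhds (f a)) :=
      (hfc a ⟨le_rfl, hab.le⟩).mono Ioo_subset_Icc_self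
    have hg1 : Filter.Tendsto g (nhdsWithin a (Ioo a b)) (nhds (g a)) :=
      (hgc a ⟨le_rfl, hab.le⟩).mono Ioo_subset_Icc_self
    have hf2 : Filter.Tendsto f (nhdsWithin a (Ioo a b)) (nhds (g a)) :=
      hg1.congr' (eventually_mem_nhdsWithin.mono fun x hx => (h hx).symm)
    rw [← h1]
    exact tendsto_nhds_unique hf1 hf2
  rcases eq_or_lt_of_le ht.2 with h2 | h2
  · haveI : (nhdsWithin b (Ioo a b)).NeBot := right_nhdsWithin_Ioo_neBot hab
    have hf1 : Filter.Tendsto f (nhdsWithin b (Ioo a b)) (nhds (f b)) :=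
      (hfc b ⟨hab.le, le_rfl⟩).mono Ioo_subset_Icc_self
    have hg1 : Filter.Tendsto g (nhdsWithin b (Ioo a b)) (nhds (g b)) :=
      (hgc b ⟨hab.le, le_rfl⟩).mono Ioo_subset_Icc_self
    have hf2 : Filter.Tendsto f (nhdsWithin b (Ioo a b)) (nhds (g b)) :=
      hg1.congr' (eventually_mem_nhdsWithin.mono fun x hx => (h hx).symm)
    rw [h2]
    exact tendsto_nhds_unique hf1 hf2
  · exact h ⟨h1, h2⟩

/-- Uniqueness on a closed interval, seeded at the right endpoint. -/
theorem eqOn_Icc_of_right {a b : ℝ} (hab : a < b) {f g : ℝ → ℝ × ℝ}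
    (hfc : ContinuousOn f (Icc a b)) (hgc : ContinuousOn g (Icc a b))
    (hf : ∀ t ∈ Ioo a b, HasDerivAt f (vf ε₁ ε₂ γ₁ γ₂ (f t)) t)
    (hg : ∀ t ∈ Ioo a b, HasDerivAt g (vf ε₁ ε₂ γ₁ γ₂ (g t)) t)
    (hfb : HasDerivWithinAt f (vf ε₁ ε₂ γ₁ γ₂ (f b)) (Iic b) b)
    (hgb : HasDerivWithinAt g (vf ε₁ ε₂ γ₁ γ₂ (g b)) (Iic b) b)
    (heq : f b = g b) : EqOn f g (Icc a b) := by
  obtain ⟨K, sb, hsb, hlip⟩ := (contDiff_vf ε₁ ε₂ γ₁ γ₂).contDiffAt.exists_lipschitzOnWith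
    (x := f b)
  have hbmem : b ∈ Icc a b := ⟨hab.le, le_rfl⟩
  have hev : {t | f t ∈ sb ∧ g t ∈ sb} ∈ nhdsWithin b (Icc a b) :=
    Filter.inter_mem ((hfc b hbmem).eventually_mem hsb)
      ((hgc b hbmem).eventually_mem (heq ▸ hsb))
  obtain ⟨ε, hε, hball⟩ := Metric.mem_nhdsWithin_iff.1 hev
  set c := max a (b - ε / 2) with hc
  have hcb : c < b := max_lt hab (by linarith)
  have hac : a ≤ c := le_max_left _ _
  have hsubset : Icc c b ⊆ ball b ε ∩ Icc a b := by
    intro t ht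
    refine ⟨?_, le_trans hac ht.1, ht.2⟩
    rw [mem_ball, Real.dist_eq, abs_of_nonpos (by linarith [ht.2])]
    have : b - ε / 2 ≤ c := le_max_right _ _
    have := ht.1
    linarith
  have hmem : ∀ t ∈ Icc c b, f t ∈ sb ∧ g t ∈ sb := fun t ht => hball (hsubset ht)
  have hIccsub : Icc c b ⊆ Icc a b := Icc_subset_Icc hac le_rfl
  have hderiv : ∀ t ∈ Ioc c b, HasDerivWithinAt f (vf ε₁ ε₂ γ₁ γ₂ (f t)) (Iic t) t := by
    intro t ht
    rcases eq_or_lt_of_le ht.2 with h | h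
    · rw [h]; exact h ▸ hfb
    · exact (hf t ⟨lt_of_le_of_lt hac ht.1, h⟩).hasDerivWithinAt
  have hderiv' : ∀ t ∈ Ioc c b, HasDerivWithinAt g (vf ε₁ ε₂ γ₁ γ₂ (g t)) (Iic t) t := by
    intro t ht
    rcases eq_or_lt_of_le ht.2 with h | h
    · rw [h]; exact h ▸ hgb
    · exact (hg t ⟨lt_of_le_of_lt hac ht.1, h⟩).hasDerivWithinAt
  have key : EqOn f g (Icc c b) :=
    ODE_solution_unique_of_mem_Icc_left (v := fun _ => vf ε₁ ε₂ γ₁ γ₂) (s := fun _ => sb)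
      (fun _ _ => hlip) (hfc.mono hIccsub) hderiv
      (fun t ht => (hmem t (Ioc_subset_Icc_self ht)).1)
      (hgc.mono hIccsub) hderiv'
      (fun t ht => (hmem t (Ioc_subset_Icc_self ht)).2) heq
  rcases le_or_gt c a with h | h
  · exact fun t ht => key ⟨le_trans h ht.1, ht.2⟩
  · have ht₁ : (c + b) / 2 ∈ Ioo a b := ⟨by linarith, by linarith⟩
    have ht₁' : (c + b) / 2 ∈ Icc c b := ⟨by linarith, by linarith⟩
    have hIoo : EqOn f g (Ioo a b) :=
      eqOn_of_isOpen isOpen_Ioo isPreconnected_Ioo hf hg ht₁ (key ht₁')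
    exact eqOn_Icc_of_eqOn_Ioo hab hIoo hfc hgc

/-- Uniqueness on a closed interval, seeded at the left endpoint. -/
theorem eqOn_Icc_of_left {a b : ℝ} (hab : a < b) {f g : ℝ → ℝ × ℝ}
    (hfc : ContinuousOn f (Icc a b)) (hgc : ContinuousOn g (Icc a b))
    (hf : ∀ t ∈ Ioo a b, HasDerivAt f (vf ε₁ ε₂ γ₁ γ₂ (f t)) t)
    (hg : ∀ t ∈ Ioo a b, HasDerivAt g (vf ε₁ ε₂ γ₁ γ₂ (g t)) t)
    (hfa : HasDerivWithinAt f (vf ε₁ ε₂ γ₁ γ₂ (f a)) (Ici a) a)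
    (hga : HasDerivWithinAt g (vf ε₁ ε₂ γ₁ γ₂ (g a)) (Ici a) a)
    (heq : f a = g a) : EqOn f g (Icc a b) := by
  obtain ⟨K, sb, hsb, hlip⟩ := (contDiff_vf ε₁ ε₂ γ₁ γ₂).contDiffAt.exists_lipschitzOnWith
    (x := f a)
  have hamem : a ∈ Icc a b := ⟨le_rfl, hab.le⟩
  have hev : {t | f t ∈ sb ∧ g t ∈ sb} ∈ nhdsWithin a (Icc a b) :=
    Filter.inter_mem ((hfc a hamem).eventually_mem hsb)
      ((hgc a hamem).eventually_mem (heq ▸ hsb))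
  obtain ⟨ε, hε, hball⟩ := Metric.mem_nhdsWithin_iff.1 hev
  set c := min b (a + ε / 2) with hc
  have hca : a < c := lt_min hab (by linarith)
  have hcb : c ≤ b := min_le_left _ _
  have hsubset : Icc a c ⊆ ball a ε ∩ Icc a b := by
    intro t ht
    refine ⟨?_, ht.1, le_trans ht.2 hcb⟩
    rw [mem_ball, Real.dist_eq, abs_of_nonneg (by linarith [ht.1])]
    have : c ≤ a + ε / 2 := min_le_right _ _
    have := ht.2
    linarith
  have hmem : ∀ t ∈ Icc a c, f t ∈ sb ∧ g t ∈ sb := fun t ht => hball (hsubset ht)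
  have hIccsub : Icc a c ⊆ Icc a b := Icc_subset_Icc le_rfl hcb
  have hderiv : ∀ t ∈ Ico a c, HasDerivWithinAt f (vf ε₁ ε₂ γ₁ γ₂ (f t)) (Ici t) t := by
    intro t ht
    rcases eq_or_lt_of_le ht.1 with h | h
    · rw [← h]; exact h ▸ hfa
    · exact (hf t ⟨h, lt_of_lt_of_le ht.2 hcb⟩).hasDerivWithinAt
  have hderiv' : ∀ t ∈ Ico a c, HasDerivWithinAt g (vf ε₁ ε₂ γ₁ γ₂ (g t)) (Ici t) t := by
    intro t ht
    rcases eq_or_lt_of_le ht.1 with h | h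
    · rw [← h]; exact h ▸ hga
    · exact (hg t ⟨h, lt_of_lt_of_le ht.2 hcb⟩).hasDerivWithinAt
  have key : EqOn f g (Icc a c) :=
    ODE_solution_unique_of_mem_Icc_right (v := fun _ => vf ε₁ ε₂ γ₁ γ₂) (s := fun _ => sb)
      (fun _ _ => hlip) (hfc.mono hIccsub) hderiv
      (fun t ht => (hmem t (Ico_subset_Icc_self ht)).1)
      (hgc.mono hIccsub) hderiv'
      (fun t ht => (hmem t (Ico_subset_Icc_self ht)).2) heq
  rcases le_or_gt b c with h | h
  · exact fun t ht => key ⟨ht.1, le_trans ht.2 h⟩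
  · have ht₁ : (a + c) / 2 ∈ Ioo a b := ⟨by linarith, by linarith⟩
    have ht₁' : (a + c) / 2 ∈ Icc a c := ⟨by linarith, by linarith⟩
    have hIoo : EqOn f g (Ioo a b) :=
      eqOn_of_isOpen isOpen_Ioo isPreconnected_Ioo hf hg ht₁ (key ht₁')
    exact eqOn_Icc_of_eqOn_Ioo hab hIoo hfc hgc


noncomputable def ham (ε₁ ε₂ γ₁ γ₂ : ℝ) (x : ℝ × ℝ) : ℝ :=
  γ₂ * x.1 - ε₂ * Real.log x.1 + (γ₁ * x.2 - ε₁ * Real.log x.2)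

theorem sub_log_ge {ε γ : ℝ} (hε : 0 < ε) (hγ : 0 < γ) {b : ℝ} (hb : 0 < b) :
    γ * (ε / γ) - ε * Real.log (ε / γ) ≤ γ * b - ε * Real.log b := by
  have hq : 0 < ε / γ := div_pos hε hγ
  have h1 : Real.log (b / (ε / γ)) ≤ b / (ε / γ) - 1 :=
    Real.log_le_sub_one_of_pos (div_pos hb hq)
  rw [Real.log_div hb.ne' hq.ne'] at h1
  have h2 : b / (ε / γ) = γ * b / ε := by field_simp
  rw [h2] at h1
  have h3 : ε * (Real.log b - Real.log (ε / γ)) ≤ ε * (γ * b / ε - 1) :=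
    mul_le_mul_of_nonneg_left h1 hε.le
  have h4 : ε * (γ * b / ε - 1) = γ * b - ε := by field_simp
  have h5 : γ * (ε / γ) = ε := by field_simp
  nlinarith [h3, h4, h5]

theorem sub_log_gt {ε γ : ℝ} (hε : 0 < ε) (hγ : 0 < γ) {b : ℝ} (hb : 0 < b)
    (hne : b ≠ ε / γ) :
    γ * (ε / γ) - ε * Real.log (ε / γ) < γ * b - ε * Real.log b := by
  have hq : 0 < ε / γ := div_pos hε hγ
  have hne1 : b / (ε / γ) ≠ 1 := by
    intro h
    exact hne (by field_simp at h; rw [eq_div_iff hγ.ne']; linarith)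
  have h1 : Real.log (b / (ε / γ)) < b / (ε / γ) - 1 :=
    Real.log_lt_sub_one_of_pos (div_pos hb hq) hne1
  rw [Real.log_div hb.ne' hq.ne'] at h1
  have h2 : b / (ε / γ) = γ * b / ε := by field_simp
  rw [h2] at h1
  have h3 : ε * (Real.log b - Real.log (ε / γ)) < ε * (γ * b / ε - 1) :=
    (mul_lt_mul_iff_right₀ hε).2 h1
  have h4 : ε * (γ * b / ε - 1) = γ * b - ε := by field_simp
  have h5 : γ * (ε / γ) = ε := by field_simp
  nlinarith [h3, h4, h5]

/-- Coordinates on a sublevel set of `b ↦ γ*b - ε*log b` are bounded. -/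
theorem sub_log_bounds {ε γ : ℝ} (hε : 0 < ε) (hγ : 0 < γ) (c : ℝ) :
    ∃ lo hi : ℝ, 0 < lo ∧
      ∀ b : ℝ, 0 < b → γ * b - ε * Real.log b ≤ c → b ∈ Icc lo hi := by
  set m : ℝ := max 1 ((2 * ε + |c| + 1) / γ) with hm
  refine ⟨Real.exp (-(c / ε)), m ^ 2, Real.exp_pos _, fun b hb hbc => ⟨?_, ?_⟩⟩
  · have h1 : -(ε * Real.log b) ≤ c := by nlinarith [mul_pos hγ hb]
    have h2' : -Real.log b ≤ c / ε := by
      rw [le_div_iff₀ hε]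
      nlinarith
    have h2 : -(c / ε) ≤ Real.log b := by linarith
    calc Real.exp (-(c / ε)) ≤ Real.exp (Real.log b) := Real.exp_le_exp.2 h2
      _ = b := Real.exp_log hb
  · by_contra hgt
    push_neg at hgt
    have hm1 : 1 ≤ m := le_max_left _ _
    have hsq : m < Real.sqrt b := by
      have := Real.sqrt_lt_sqrt (by positivity : (0:ℝ) ≤ m ^ 2) hgt
      rwa [Real.sqrt_sq (by linarith : (0:ℝ) ≤ m)] at this
    have hsb : 1 ≤ Real.sqrt b := le_trans hm1 hsq.le
    have hlog : Real.log b ≤ 2 * Real.sqrt b := by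
      have h1 : Real.log (Real.sqrt b) ≤ Real.sqrt b - 1 :=
        Real.log_le_sub_one_of_pos (by linarith)
      have h2 : Real.log (Real.sqrt b) = Real.log b / 2 := Real.log_sqrt hb.le
      linarith
    have hb' : Real.sqrt b * Real.sqrt b = b := Real.mul_self_sqrt hb.le
    have hγm : 2 * ε + |c| + 1 ≤ γ * m := by
      have : (2 * ε + |c| + 1) / γ ≤ m := le_max_right _ _
      rw [div_le_iff₀ hγ] at this
      linarith
    have key : Real.sqrt b * (γ * Real.sqrt b - 2 * ε) ≤ c := by nlinarith
    have hfac : |c| + 1 ≤ γ * Real.sqrt b - 2 * ε := by nlinarith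
    nlinarith [abs_nonneg c, le_abs_self c]

theorem hasDerivWithinAt_ham_comp {f : ℝ → ℝ × ℝ} {P : Set ℝ} {t : ℝ}
    (hd : HasDerivWithinAt f (vf ε₁ ε₂ γ₁ γ₂ (f t)) P t)
    (h1 : 0 < (f t).1) (h2 : 0 < (f t).2) :
    HasDerivWithinAt (fun t => ham ε₁ ε₂ γ₁ γ₂ (f t)) 0 P t := by
  have hu : HasDerivWithinAt (fun t => (f t).1) ((f t).1 * (ε₁ - γ₁ * (f t).2)) P t := by
    have := (hasFDerivAt_fst (𝕜 := ℝ) (p := f t)).comp_hasDerivWithinAt t hd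
    simpa [vf, Function.comp_def] using this
  have hv : HasDerivWithinAt (fun t => (f t).2) (-(f t).2 * (ε₂ - γ₂ * (f t).1)) P t := by
    have := (hasFDerivAt_snd (𝕜 := ℝ) (p := f t)).comp_hasDerivWithinAt t hd
    simpa [vf, Function.comp_def] using this
  have h := (((hu.const_mul γ₂).sub ((hu.log h1.ne').const_mul ε₂)).add
    (((hv.const_mul γ₁).sub ((hv.log h2.ne').const_mul ε₁))))
  have heq : γ₂ * ((f t).1 * (ε₁ - γ₁ * (f t).2)) -
      ε₂ * ((f t).1 * (ε₁ - γ₁ * (f t).2) / (f t).1) +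
      (γ₁ * (-(f t).2 * (ε₂ - γ₂ * (f t).1)) -
      ε₁ * (-(f t).2 * (ε₂ - γ₂ * (f t).1) / (f t).2)) = 0 := by
    field_simp
    ring
  rw [heq] at h
  exact h.congr (fun y _ => by simp [ham]) (by simp [ham])

theorem ham_eqOn {f : ℝ → ℝ × ℝ} {P : Set ℝ} (hP : Convex ℝ P)
    (hd : ∀ t ∈ P, HasDerivWithinAt f (vf ε₁ ε₂ γ₁ γ₂ (f t)) P t)
    (hpos : ∀ t ∈ P, 0 < (f t).1 ∧ 0 < (f t).2)
    {t₀ t₁ : ℝ} (h₀ : t₀ ∈ P) (h₁ : t₁ ∈ P) :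
    ham ε₁ ε₂ γ₁ γ₂ (f t₁) = ham ε₁ ε₂ γ₁ γ₂ (f t₀) := by
  have := hP.norm_image_sub_le_of_norm_hasDerivWithin_le
    (f := fun t => ham ε₁ ε₂ γ₁ γ₂ (f t)) (f' := fun _ => 0)
    (fun t ht => hasDerivWithinAt_ham_comp (hd t ht) (hpos t ht).1 (hpos t ht).2)
    (fun t _ => le_of_eq (norm_zero)) h₀ h₁
  have h0 : ‖ham ε₁ ε₂ γ₁ γ₂ (f t₁) - ham ε₁ ε₂ γ₁ γ₂ (f t₀)‖ ≤ 0 := by simpa using this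
  exact sub_eq_zero.1 (norm_le_zero_iff.1 h0)


/-- Points on a level set of the Hamiltonian lie in a rectangle away from the axes. -/
theorem ham_bounds (hε₁ : 0 < ε₁) (hε₂ : 0 < ε₂) (hγ₁ : 0 < γ₁) (hγ₂ : 0 < γ₂) (h₀ : ℝ) :
    ∃ lo hi : ℝ, 0 < lo ∧ ∀ x : ℝ × ℝ, 0 < x.1 → 0 < x.2 →
      ham ε₁ ε₂ γ₁ γ₂ x = h₀ → x.1 ∈ Icc lo hi ∧ x.2 ∈ Icc lo hi := by
  set m₁ : ℝ := γ₂ * (ε₂ / γ₂) - ε₂ * Real.log (ε₂ / γ₂) with hm₁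
  set m₂ : ℝ := γ₁ * (ε₁ / γ₁) - ε₁ * Real.log (ε₁ / γ₁) with hm₂
  obtain ⟨lo₁, hi₁, hlo₁, hb₁⟩ := sub_log_bounds hε₂ hγ₂ (h₀ - m₂)
  obtain ⟨lo₂, hi₂, hlo₂, hb₂⟩ := sub_log_bounds hε₁ hγ₁ (h₀ - m₁)
  refine ⟨min lo₁ lo₂, max hi₁ hi₂, lt_min hlo₁ hlo₂, fun x hx1 hx2 hham => ?_⟩
  simp only [ham] at hham
  have e1 : γ₂ * x.1 - ε₂ * Real.log x.1 ≤ h₀ - m₂ := by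
    have := sub_log_ge hε₁ hγ₁ hx2
    rw [← hm₂] at this
    linarith
  have e2 : γ₁ * x.2 - ε₁ * Real.log x.2 ≤ h₀ - m₁ := by
    have := sub_log_ge hε₂ hγ₂ hx1
    rw [← hm₁] at this
    linarith
  obtain ⟨ha1, ha2⟩ := hb₁ x.1 hx1 e1
  obtain ⟨hb1', hb2'⟩ := hb₂ x.2 hx2 e2
  exact ⟨⟨le_trans (min_le_left _ _) ha1, le_trans ha2 (le_max_left _ _)⟩,
    ⟨le_trans (min_le_right _ _) hb1', le_trans hb2' (le_max_right _ _)⟩⟩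

/-- A solution of the Volterra system starting in the open quadrant stays in the
quadrant and conserves the Hamiltonian. -/
theorem solution_stays (hε₁ : 0 < ε₁) (hε₂ : 0 < ε₂) (hγ₁ : 0 < γ₁) (hγ₂ : 0 < γ₂)
    {P : Set ℝ} (hPc : IsPreconnected P) (hPo : P.OrdConnected) {f : ℝ → ℝ × ℝ}
    (hd : ∀ t ∈ P, HasDerivWithinAt f (vf ε₁ ε₂ γ₁ γ₂ (f t)) P t)
    {t₀ : ℝ} (ht₀ : t₀ ∈ P) (h01 : 0 < (f t₀).1) (h02 : 0 < (f t₀).2) :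
    ∀ t ∈ P, 0 < (f t).1 ∧ 0 < (f t).2 ∧
      ham ε₁ ε₂ γ₁ γ₂ (f t) = ham ε₁ ε₂ γ₁ γ₂ (f t₀) := by
  set h₀ : ℝ := ham ε₁ ε₂ γ₁ γ₂ (f t₀) with hh₀
  obtain ⟨lo, hi, hlo, hbd⟩ := ham_bounds hε₁ hε₂ hγ₁ hγ₂ h₀
  haveI : PreconnectedSpace ↥P := isPreconnected_iff_preconnectedSpace.1 hPc
  have hfc : ContinuousOn f P := fun t ht => (hd t ht).continuousWithinAt
  have fc : Continuous (fun x : ↥P => f ↑x) := hfc.restrict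
  set S : Set ↥P := {x : ↥P | lo ≤ (f ↑x).1 ∧ lo ≤ (f ↑x).2 ∧ ham ε₁ ε₂ γ₁ γ₂ (f ↑x) = h₀}
    with hS
  -- S is closed
  have hA : IsClosed {x : ↥P | lo ≤ (f ↑x).1 ∧ lo ≤ (f ↑x).2} := by
    have h1 : IsClosed {x : ↥P | lo ≤ (f ↑x).1} :=
      isClosed_le continuous_const (continuous_fst.comp fc)
    have h2 : IsClosed {x : ↥P | lo ≤ (f ↑x).2} :=
      isClosed_le continuous_const (continuous_snd.comp fc)
    exact h1.inter h2
  have hhamcont : ContinuousOn (fun x : ↥P => ham ε₁ ε₂ γ₁ γ₂ (f ↑x))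
      {x : ↥P | lo ≤ (f ↑x).1 ∧ lo ≤ (f ↑x).2} := by
    intro x hx
    have hx1 : (0:ℝ) < (f ↑x).1 := lt_of_lt_of_le hlo hx.1
    have hx2 : (0:ℝ) < (f ↑x).2 := lt_of_lt_of_le hlo hx.2
    have c1 : ContinuousAt (fun x : ↥P => (f ↑x).1) x := (continuous_fst.comp fc).continuousAt
    have c2 : ContinuousAt (fun x : ↥P => (f ↑x).2) x := (continuous_snd.comp fc).continuousAt
    have cl1 : ContinuousAt (fun x : ↥P => Real.log ((f ↑x).1)) x := c1.log hx1.ne'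
    have cl2 : ContinuousAt (fun x : ↥P => Real.log ((f ↑x).2)) x := c2.log hx2.ne'
    exact ContinuousAt.continuousWithinAt
      (((c1.const_mul γ₂).sub (cl1.const_mul ε₂)).add
        ((c2.const_mul γ₁).sub (cl2.const_mul ε₁)))
  have hSclosed : IsClosed S := by
    have h := hhamcont.preimage_isClosed_of_isClosed hA (isClosed_singleton (x := h₀))
    have : S = {x : ↥P | lo ≤ (f ↑x).1 ∧ lo ≤ (f ↑x).2} ∩
        ((fun x : ↥P => ham ε₁ ε₂ γ₁ γ₂ (f ↑x)) ⁻¹' {h₀}) := by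
      ext x
      simp only [hS, mem_setOf_eq, mem_inter_iff, mem_preimage, mem_singleton_iff]
      tauto
    rw [this]
    exact h
  -- S is open
  have hSopen : IsOpen S := by
    rw [isOpen_iff_mem_nhds]
    intro x hx
    have hx1 : (0:ℝ) < (f ↑x).1 := lt_of_lt_of_le hlo hx.1
    have hx2 : (0:ℝ) < (f ↑x).2 := lt_of_lt_of_le hlo hx.2.1
    have hq : {y : ℝ × ℝ | 0 < y.1 ∧ 0 < y.2} ∈ nhds (f ↑x) :=
      ((isOpen_lt continuous_const continuous_fst).inter
        (isOpen_lt continuous_const continuous_snd)).mem_nhds ⟨hx1, hx2⟩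
    have hev : f ⁻¹' {y : ℝ × ℝ | 0 < y.1 ∧ 0 < y.2} ∈ nhdsWithin (↑x) P :=
      (hfc ↑x x.2).preimage_mem_nhdsWithin hq
    obtain ⟨δ, hδ, hball⟩ := Metric.mem_nhdsWithin_iff.1 hev
    set V : Set ℝ := Ioo (↑x - δ) (↑x + δ) ∩ P with hV
    have hVconv : Convex ℝ V :=
      (Set.ordConnected_Ioo.inter hPo).convex
    have hVsub : V ⊆ ball (↑x : ℝ) δ ∩ P := by
      intro t ht
      refine ⟨?_, ht.2⟩
      rw [mem_ball, Real.dist_eq, abs_lt]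
      constructor <;> [linarith [ht.1.1]; linarith [ht.1.2]]
    have hVpos : ∀ t ∈ V, 0 < (f t).1 ∧ 0 < (f t).2 := fun t ht => hball (hVsub ht)
    have hVd : ∀ t ∈ V, HasDerivWithinAt f (vf ε₁ ε₂ γ₁ γ₂ (f t)) V t :=
      fun t ht => (hd t ht.2).mono inter_subset_right
    have hxV : (↑x : ℝ) ∈ V := ⟨⟨by linarith, by linarith⟩, x.2⟩
    have hVham : ∀ t ∈ V, ham ε₁ ε₂ γ₁ γ₂ (f t) = h₀ := by
      intro t ht
      have := ham_eqOn hVconv hVd hVpos hxV ht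
      rw [this, hx.2.2]
    have hsub2 : (Subtype.val ⁻¹' (Ioo ((↑x : ℝ) - δ) (↑x + δ)) : Set ↥P) ⊆ S := by
      intro y hy
      have hyV : (↑y : ℝ) ∈ V := ⟨hy, y.2⟩
      obtain ⟨hp1, hp2⟩ := hVpos ↑y hyV
      have hh := hVham ↑y hyV
      obtain ⟨hb1, hb2⟩ := hbd (f ↑y) hp1 hp2 hh
      exact ⟨hb1.1, hb2.1, hh⟩
    exact Filter.mem_of_superset
      (continuous_subtype_val.continuousAt.preimage_mem_nhds
        (Ioo_mem_nhds (by linarith) (by linarith))) hsub2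
  -- clopen, nonempty, so S = univ
  have hx₀ : (⟨t₀, ht₀⟩ : ↥P) ∈ S := by
    obtain ⟨hb1, hb2⟩ := hbd (f t₀) h01 h02 rfl
    exact ⟨hb1.1, hb2.1, rfl⟩
  have : S = univ := IsClopen.eq_univ ⟨hSclosed, hSopen⟩ ⟨_, hx₀⟩
  intro t ht
  have hmem : (⟨t, ht⟩ : ↥P) ∈ S := this ▸ mem_univ _
  exact ⟨lt_of_lt_of_le hlo hmem.1, lt_of_lt_of_le hlo hmem.2.1, hmem.2.2⟩


/-- Uniform-time Picard–Lindelöf step on a bounded region. -/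
theorem pl_step (ε₁ ε₂ γ₁ γ₂ ρ : ℝ) (hρ : 0 ≤ ρ) :
    ∃ τ > (0:ℝ), ∀ (t₀ : ℝ) (x₀ : ℝ × ℝ), x₀ ∈ closedBall 0 ρ →
      ∃ f : ℝ → ℝ × ℝ, f t₀ = x₀ ∧ ∀ t ∈ Icc (t₀ - τ) (t₀ + τ),
        HasDerivWithinAt f (vf ε₁ ε₂ γ₁ γ₂ (f t)) (Icc (t₀ - τ) (t₀ + τ)) t := by
  obtain ⟨K, hK⟩ := lipschitz_vf ε₁ ε₂ γ₁ γ₂ (ρ + 1)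
  obtain ⟨C, hC⟩ := (isCompact_closedBall (0 : ℝ × ℝ) (ρ + 1)).exists_bound_of_continuousOn
    ((contDiff_vf ε₁ ε₂ γ₁ γ₂).continuous.continuousOn)
  set C' : ℝ := max C 0 + 1 with hC'
  have hC'pos : 0 < C' := by positivity
  refine ⟨1 / C', by positivity, fun t₀ x₀ hx₀ => ?_⟩
  set τ : ℝ := 1 / C'
  have hτ : 0 < τ := by positivity
  have hsub : closedBall x₀ 1 ⊆ closedBall (0 : ℝ × ℝ) (ρ + 1) := by
    apply closedBall_subset_closedBall'
    rw [mem_closedBall] at hx₀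
    linarith
  have hpl : IsPicardLindelof (fun _ => vf ε₁ ε₂ γ₁ γ₂)
      (⟨t₀, by linarith, by linarith⟩ : Icc (t₀ - τ) (t₀ + τ)) x₀ 1 0 ⟨C', hC'pos.le⟩ K :=
    { lipschitzOnWith := fun t _ => hK.mono hsub
      continuousOn := fun x _ => continuousOn_const
      norm_le := fun t _ x hx =>
        le_trans (hC x (hsub hx)) (le_trans (le_max_left C 0) (by show max C 0 ≤ C'; linarith))
      mul_max_le := by
        have : max (t₀ + τ - t₀) (t₀ - (t₀ - τ)) = τ := by
          rw [add_sub_cancel_left, sub_sub_cancel, max_self]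
        show C' * max (t₀ + τ - t₀) (t₀ - (t₀ - τ)) ≤ _
        rw [this]
        rw [mul_one_div, div_self hC'pos.ne']
        simp
    }
  obtain ⟨f, hf0, hfd⟩ := hpl.exists_eq_forall_mem_Icc_hasDerivWithinAt₀
  exact ⟨f, hf0, hfd⟩


/-- Global-in-time solution with positive initial data. -/
theorem global_solution (hε₁ : 0 < ε₁) (hε₂ : 0 < ε₂) (hγ₁ : 0 < γ₁) (hγ₂ : 0 < γ₂)
    (x₀ : ℝ × ℝ) (h1 : 0 < x₀.1) (h2 : 0 < x₀.2) :
    ∃ M : ℝ → ℝ × ℝ, M 0 = x₀ ∧ (∀ t, HasDerivAt M (vf ε₁ ε₂ γ₁ γ₂ (M t)) t) ∧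
      ∀ t, 0 < (M t).1 ∧ 0 < (M t).2 ∧
        ham ε₁ ε₂ γ₁ γ₂ (M t) = ham ε₁ ε₂ γ₁ γ₂ x₀ := by
  set h₀ : ℝ := ham ε₁ ε₂ γ₁ γ₂ x₀ with hh₀
  obtain ⟨lo, hi, hlo, hbd⟩ := ham_bounds hε₁ hε₂ hγ₁ hγ₂ h₀
  have hin : ∀ x : ℝ × ℝ, 0 < x.1 → 0 < x.2 → ham ε₁ ε₂ γ₁ γ₂ x = h₀ →
      x ∈ closedBall (0 : ℝ × ℝ) |hi| := by
    intro x hx1 hx2 hham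
    obtain ⟨hb1, hb2⟩ := hbd x hx1 hx2 hham
    rw [mem_closedBall, dist_zero_right, Prod.norm_def]
    have e1 : ‖x.1‖ ≤ |hi| := by
      rw [Real.norm_eq_abs, abs_of_pos hx1]
      exact le_trans hb1.2 (le_abs_self hi)
    have e2 : ‖x.2‖ ≤ |hi| := by
      rw [Real.norm_eq_abs, abs_of_pos hx2]
      exact le_trans hb2.2 (le_abs_self hi)
    exact max_le e1 e2
  obtain ⟨τ, hτ, hstep⟩ := pl_step ε₁ ε₂ γ₁ γ₂ |hi| (abs_nonneg hi)
  set A : ℕ → ℝ := fun n => ((n : ℝ) + 1) * τ with hA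
  have hApos : ∀ n, 0 < A n := fun n => by
    have : (0:ℝ) < (n : ℝ) + 1 := by positivity
    exact mul_pos this hτ
  have hAmono : ∀ {m n : ℕ}, m ≤ n → A m ≤ A n := by
    intro m n hmn
    have : (m : ℝ) ≤ (n : ℝ) := Nat.cast_le.2 hmn
    exact mul_le_mul_of_nonneg_right (by linarith) hτ.le
  have hAsucc : ∀ n, A (n + 1) = A n + τ := by
    intro n
    simp only [hA]
    push_cast
    ring
  have invar : ∀ (a b : ℝ), a ≤ 0 → 0 ≤ b → ∀ f : ℝ → ℝ × ℝ, f 0 = x₀ →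
      (∀ t ∈ Icc a b, HasDerivWithinAt f (vf ε₁ ε₂ γ₁ γ₂ (f t)) (Icc a b) t) →
      ∀ t ∈ Icc a b, 0 < (f t).1 ∧ 0 < (f t).2 ∧ ham ε₁ ε₂ γ₁ γ₂ (f t) = h₀ := by
    intro a b ha hb f hf0 hfd t ht
    have hp1 : 0 < (f 0).1 := by rw [hf0]; exact h1
    have hp2 : 0 < (f 0).2 := by rw [hf0]; exact h2
    have := solution_stays hε₁ hε₂ hγ₁ hγ₂ isPreconnected_Icc Set.ordConnected_Icc hfd
      (⟨ha, hb⟩ : (0:ℝ) ∈ Icc a b) hp1 hp2 t ht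
    exact ⟨this.1, this.2.1, by rw [this.2.2, hf0]⟩
  set Q : ℕ → Prop := fun n => ∃ f : ℝ → ℝ × ℝ, f 0 = x₀ ∧
    (∀ t ∈ Icc (-(A n)) (A n),
      HasDerivWithinAt f (vf ε₁ ε₂ γ₁ γ₂ (f t)) (Icc (-(A n)) (A n)) t) ∧
    (∀ t ∈ Icc (-(A n)) (A n),
      0 < (f t).1 ∧ 0 < (f t).2 ∧ ham ε₁ ε₂ γ₁ γ₂ (f t) = h₀) with hQ
  have hQ0 : Q 0 := by
    obtain ⟨f, hf0, hfd⟩ := hstep 0 x₀ (hin x₀ h1 h2 rfl)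
    have hA0 : A 0 = τ := by simp [hA]
    have hIcc : Icc (0 - τ) (0 + τ) = Icc (-(A 0)) (A 0) := by
      rw [hA0, zero_sub, zero_add]
    rw [hIcc] at hfd
    exact ⟨f, hf0, hfd, invar _ _ (by linarith [hApos 0]) (hApos 0).le f hf0 hfd⟩
  have hQstep : ∀ n, Q n → Q (n + 1) := by
    intro n hQn
    obtain ⟨f, hf0, hfd, hfi⟩ := hQn
    set a : ℝ := A n with ha
    have hapos : 0 < a := hApos n
    have haτ : τ ≤ a := by
      have hn : (0:ℝ) ≤ (n : ℝ) := Nat.cast_nonneg n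
      have he : a = ((n:ℝ) + 1) * τ := ha
      nlinarith
    have hB : A (n + 1) = a + τ := hAsucc n
    have hmemA : a ∈ Icc (-a) a := ⟨by linarith, le_rfl⟩
    have hmemA' : -a ∈ Icc (-a) a := ⟨le_rfl, by linarith⟩
    obtain ⟨gp, hgp0, hgpd⟩ := hstep a (f a)
      (hin _ (hfi a hmemA).1 (hfi a hmemA).2.1 (hfi a hmemA).2.2)
    obtain ⟨gm, hgm0, hgmd⟩ := hstep (-a) (f (-a))
      (hin _ (hfi _ hmemA').1 (hfi _ hmemA').2.1 (hfi _ hmemA').2.2)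
    have hfc : ContinuousOn f (Icc (-a) a) := fun t ht => (hfd t ht).continuousWithinAt
    have hgpc : ContinuousOn gp (Icc (a - τ) (a + τ)) :=
      fun t ht => (hgpd t ht).continuousWithinAt
    have hgmc : ContinuousOn gm (Icc (-a - τ) (-a + τ)) :=
      fun t ht => (hgmd t ht).continuousWithinAt
    have hfD : ∀ t ∈ Ioo (-a) a, HasDerivAt f (vf ε₁ ε₂ γ₁ γ₂ (f t)) t :=
      fun t ht => (hfd t (Ioo_subset_Icc_self ht)).hasDerivAt (Icc_mem_nhds ht.1 ht.2)
    have hgpD : ∀ t ∈ Ioo (a - τ) (a + τ), HasDerivAt gp (vf ε₁ ε₂ γ₁ γ₂ (gp t)) t :=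
      fun t ht => (hgpd t (Ioo_subset_Icc_self ht)).hasDerivAt (Icc_mem_nhds ht.1 ht.2)
    have hgmD : ∀ t ∈ Ioo (-a - τ) (-a + τ), HasDerivAt gm (vf ε₁ ε₂ γ₁ γ₂ (gm t)) t :=
      fun t ht => (hgmd t (Ioo_subset_Icc_self ht)).hasDerivAt (Icc_mem_nhds ht.1 ht.2)
    have hovp : EqOn f gp (Icc (a - τ) a) :=
      eqOn_Icc_of_right (by linarith)
        (hfc.mono (Icc_subset_Icc (by linarith) le_rfl))
        (hgpc.mono (Icc_subset_Icc le_rfl (by linarith)))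
        (fun t ht => hfD t ⟨by linarith [ht.1], ht.2⟩)
        (fun t ht => hgpD t ⟨ht.1, by linarith [ht.2]⟩)
        ((hfd a hmemA).mono_of_mem_nhdsWithin (Icc_mem_nhdsLE_of_mem ⟨by linarith, le_rfl⟩))
        ((hgpd a ⟨by linarith, by linarith⟩).mono_of_mem_nhdsWithin
          (Icc_mem_nhdsLE_of_mem ⟨by linarith, by linarith⟩))
        hgp0.symm
    have hovm : EqOn f gm (Icc (-a) (-a + τ)) :=
      eqOn_Icc_of_left (by linarith)
        (hfc.mono (Icc_subset_Icc le_rfl (by linarith)))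
        (hgmc.mono (Icc_subset_Icc (by linarith) le_rfl))
        (fun t ht => hfD t ⟨ht.1, by linarith [ht.2]⟩)
        (fun t ht => hgmD t ⟨by linarith [ht.1], ht.2⟩)
        ((hfd (-a) hmemA').mono_of_mem_nhdsWithin (Icc_mem_nhdsGE_of_mem ⟨le_rfl, by linarith⟩))
        ((hgmd (-a) ⟨by linarith, by linarith⟩).mono_of_mem_nhdsWithin
          (Icc_mem_nhdsGE_of_mem ⟨by linarith, by linarith⟩))
        hgm0.symm
    set F : ℝ → ℝ × ℝ := fun t => if t < -a then gm t else if t ≤ a then f t else gp t with hF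
    have hE1 : ∀ t ∈ Icc (-a) a, F t = f t := by
      intro t ht
      simp only [hF]
      rw [if_neg (not_lt.2 ht.1), if_pos ht.2]
    have hE2 : ∀ t ∈ Icc (a - τ) (a + τ), F t = gp t := by
      intro t ht
      rcases le_or_gt t a with h | h
      · rw [hE1 t ⟨by linarith [ht.1], h⟩]
        exact hovp ⟨ht.1, h⟩
      · simp only [hF]
        rw [if_neg (not_lt.2 (by linarith : -a ≤ t)), if_neg (not_le.2 h)]
    have hE3 : ∀ t ∈ Icc (-a - τ) (-a + τ), F t = gm t := by
      intro t ht
      rcases lt_or_ge t (-a) with h | h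
      · simp only [hF]
        rw [if_pos h]
      · rw [hE1 t ⟨h, by linarith [ht.2]⟩]
        exact hovm ⟨h, ht.2⟩
    have hF0 : F 0 = x₀ := by
      rw [hE1 0 ⟨by linarith, by linarith⟩, hf0]
    have hFd : ∀ t ∈ Icc (-(A (n+1))) (A (n+1)),
        HasDerivWithinAt F (vf ε₁ ε₂ γ₁ γ₂ (F t)) (Icc (-(A (n+1))) (A (n+1))) t := by
      rw [hB]
      intro t ht
      rcases lt_or_ge t (-a + τ) with hc1 | hc1
      · -- left piece: use gm
        have hmemt : t ∈ Icc (-a - τ) (-a + τ) := ⟨by linarith [ht.1], hc1.le⟩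
        have hmem : Icc (-a - τ) (-a + τ) ∈ nhdsWithin t (Icc (-(a + τ)) (a + τ)) := by
          apply Filter.mem_of_superset
            (inter_mem_nhdsWithin _ (Iio_mem_nhds hc1))
          rintro z ⟨hz1, hz2⟩
          exact ⟨by linarith [hz1.1], le_of_lt hz2⟩
        rw [hE3 t hmemt]
        exact ((hgmd t hmemt).congr (fun z hz => hE3 z hz) (hE3 t hmemt)).mono_of_mem_nhdsWithin
          hmem
      rcases lt_or_ge (a - τ) t with hc2 | hc2
      · -- right piece: use gp
        have hmemt : t ∈ Icc (a - τ) (a + τ) := ⟨hc2.le, ht.2⟩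
        have hmem : Icc (a - τ) (a + τ) ∈ nhdsWithin t (Icc (-(a + τ)) (a + τ)) := by
          apply Filter.mem_of_superset
            (inter_mem_nhdsWithin _ (Ioi_mem_nhds hc2))
          rintro z ⟨hz1, hz2⟩
          exact ⟨le_of_lt hz2, hz1.2⟩
        rw [hE2 t hmemt]
        exact ((hgpd t hmemt).congr (fun z hz => hE2 z hz) (hE2 t hmemt)).mono_of_mem_nhdsWithin
          hmem
      · -- middle piece: use f
        have hmemt : t ∈ Icc (-a) a := ⟨by linarith, by linarith⟩
        have hIoo : t ∈ Ioo (-a) a := ⟨by linarith, by linarith⟩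
        have hev : F =ᶠ[nhds t] f :=
          Filter.eventuallyEq_of_mem (Icc_mem_nhds hIoo.1 hIoo.2) hE1
        rw [hE1 t hmemt]
        exact (((hfD t hIoo).congr_of_eventuallyEq hev)).hasDerivWithinAt
    refine ⟨F, hF0, hFd, ?_⟩
    exact invar _ _ (by linarith [hApos (n+1)]) (hApos (n+1)).le F hF0 hFd
  have hQall : ∀ n, Q n := by
    intro n
    induction n with
    | zero => exact hQ0
    | succ k ih => exact hQstep k ih
  choose fam hfam0 hfamd hfami using hQall
  have hcons : ∀ m n : ℕ, m ≤ n → EqOn (fam m) (fam n) (Icc (-(A m)) (A m)) := by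
    intro m n hmn
    have hAle : A m ≤ A n := hAmono hmn
    have hsub : Icc (-(A m)) (A m) ⊆ Icc (-(A n)) (A n) :=
      Icc_subset_Icc (by linarith) hAle
    have hO : EqOn (fam m) (fam n) (Ioo (-(A m)) (A m)) :=
      eqOn_of_isOpen isOpen_Ioo isPreconnected_Ioo
        (fun t ht => (hfamd m t (Ioo_subset_Icc_self ht)).hasDerivAt
          (Icc_mem_nhds ht.1 ht.2))
        (fun t ht => (hfamd n t (hsub (Ioo_subset_Icc_self ht))).hasDerivAt
          (Icc_mem_nhds (by linarith [ht.1]) (by linarith [ht.2])))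
        (⟨by linarith [hApos m], by linarith [hApos m]⟩ : (0:ℝ) ∈ Ioo (-(A m)) (A m))
        (by rw [hfam0 m, hfam0 n])
    exact eqOn_Icc_of_eqOn_Ioo (by linarith [hApos m]) hO
      (fun t ht => (hfamd m t ht).continuousWithinAt)
      (ContinuousOn.mono (fun t ht => (hfamd n t ht).continuousWithinAt) hsub)
  set nn : ℝ → ℕ := fun t => ⌈|t| / τ⌉₊ with hnn
  have hnn_prop : ∀ t : ℝ, |t| + τ ≤ A (nn t) := by
    intro t
    have h1 : |t| / τ ≤ (⌈|t| / τ⌉₊ : ℝ) := Nat.le_ceil _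
    rw [div_le_iff₀ hτ] at h1
    have : A (nn t) = ((⌈|t| / τ⌉₊ : ℝ) + 1) * τ := rfl
    rw [this]
    nlinarith
  have hself : ∀ t : ℝ, t ∈ Icc (-(A (nn t))) (A (nn t)) := by
    intro t
    have := hnn_prop t
    have h2 := abs_le.1 (by linarith [le_abs_self t, neg_abs_le t] :
      |t| ≤ A (nn t))
    exact ⟨h2.1, h2.2⟩
  set M : ℝ → ℝ × ℝ := fun t => fam (nn t) t with hM
  have hagree : ∀ t : ℝ, ∀ t' ∈ ball t (τ / 2), M t' = fam (nn t + 1) t' := by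
    intro t t' ht'
    rw [mem_ball, Real.dist_eq] at ht'
    have hd : |t'| ≤ |t| + τ / 2 := by
      calc |t'| = |t + (t' - t)| := by ring_nf
        _ ≤ |t| + |t' - t| := abs_add_le _ _
        _ ≤ |t| + τ / 2 := by linarith
    have h2 : t' ∈ Icc (-(A (nn t + 1))) (A (nn t + 1)) := by
      have hp := hnn_prop t
      rw [hAsucc (nn t)]
      have habs : |t'| ≤ A (nn t) + τ := by linarith
      have := abs_le.1 habs
      exact ⟨this.1, this.2⟩
    rcases le_total (nn t') (nn t + 1) with h | h
    · exact hcons _ _ h (hself t')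
    · exact (hcons _ _ h h2).symm
  have hMder : ∀ t, HasDerivAt M (vf ε₁ ε₂ γ₁ γ₂ (M t)) t := by
    intro t
    have hτ2 : (0:ℝ) < τ / 2 := by linarith
    have hev : M =ᶠ[nhds t] fam (nn t + 1) :=
      Filter.eventuallyEq_of_mem (ball_mem_nhds t hτ2) (fun t' ht' => hagree t t' ht')
    have hMt : M t = fam (nn t + 1) t := hagree t t (mem_ball_self hτ2)
    have hint : t ∈ Ioo (-(A (nn t + 1))) (A (nn t + 1)) := by
      have hp := hnn_prop t
      rw [hAsucc (nn t)]
      constructor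
      · linarith [neg_abs_le t]
      · linarith [le_abs_self t]
    have hd : HasDerivAt (fam (nn t + 1)) (vf ε₁ ε₂ γ₁ γ₂ (fam (nn t + 1) t)) t :=
      (hfamd _ t (Ioo_subset_Icc_self hint)).hasDerivAt (Icc_mem_nhds hint.1 hint.2)
    have := hd.congr_of_eventuallyEq hev
    rw [hMt]
    exact this
  have hMinv : ∀ t, 0 < (M t).1 ∧ 0 < (M t).2 ∧ ham ε₁ ε₂ γ₁ γ₂ (M t) = h₀ :=
    fun t => hfami (nn t) t (hself t)
  exact ⟨M, hfam0 (nn 0), hMder, hMinv⟩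


section Calc

theorem strictMonoOn_Icc_of {f g : ℝ → ℝ} (hf : ∀ t, HasDerivAt f (g t) t) {a b : ℝ}
    (hpos : ∀ t ∈ Ioo a b, 0 < g t) : StrictMonoOn f (Icc a b) :=
  strictMonoOn_of_deriv_pos (convex_Icc a b)
    (fun t _ => (hf t).continuousAt.continuousWithinAt)
    (by rw [interior_Icc]; intro x hx; rw [(hf x).deriv]; exact hpos x hx)

theorem strictAntiOn_Icc_of {f g : ℝ → ℝ} (hf : ∀ t, HasDerivAt f (g t) t) {a b : ℝ}
    (hneg : ∀ t ∈ Ioo a b, g t < 0) : StrictAntiOn f (Icc a b) :=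
  strictAntiOn_of_deriv_neg (convex_Icc a b)
    (fun t _ => (hf t).continuousAt.continuousWithinAt)
    (by rw [interior_Icc]; intro x hx; rw [(hf x).deriv]; exact hneg x hx)

theorem le_sub_of_deriv_le {f g : ℝ → ℝ} (hf : ∀ t, HasDerivAt f (g t) t) {a b c : ℝ}
    (hab : a ≤ b) (hbd : ∀ t ∈ Ioo a b, g t ≤ -c) : f b ≤ f a - c * (b - a) := by
  have hda : ∀ t : ℝ, HasDerivAt (fun y => f y + c * y) (g t + c) t := by
    intro t
    have h2 : HasDerivAt (fun y : ℝ => c * y) c t := by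
      simpa using (hasDerivAt_id t).const_mul c
    exact (hf t).add h2
  have h : AntitoneOn (fun y => f y + c * y) (Icc a b) := by
    apply antitoneOn_of_deriv_nonpos (convex_Icc a b)
    · exact fun t _ => (hda t).continuousAt.continuousWithinAt
    · exact fun t _ => (hda t).differentiableAt.differentiableWithinAt
    · rw [interior_Icc]
      intro x hx
      rw [(hda x).deriv]
      linarith [hbd x hx]
  have := h ⟨le_rfl, hab⟩ ⟨hab, le_rfl⟩ hab
  simp only at this
  linarith

theorem sub_le_of_deriv_ge {f g : ℝ → ℝ} (hf : ∀ t, HasDerivAt f (g t) t) {a b c : ℝ}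
    (hab : a ≤ b) (hbd : ∀ t ∈ Ioo a b, c ≤ g t) : f a + c * (b - a) ≤ f b := by
  have hda : ∀ t : ℝ, HasDerivAt (fun y => f y - c * y) (g t - c) t := by
    intro t
    have h2 : HasDerivAt (fun y : ℝ => c * y) c t := by
      simpa using (hasDerivAt_id t).const_mul c
    exact (hf t).sub h2
  have h : MonotoneOn (fun y => f y - c * y) (Icc a b) := by
    apply monotoneOn_of_deriv_nonneg (convex_Icc a b)
    · exact fun t _ => (hda t).continuousAt.continuousWithinAt
    · exact fun t _ => (hda t).differentiableAt.differentiableWithinAt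
    · rw [interior_Icc]
      intro x hx
      rw [(hda x).deriv]
      linarith [hbd x hx]
  have := h ⟨le_rfl, hab⟩ ⟨hab, le_rfl⟩ hab
  simp only at this
  linarith

theorem monotoneOn_Icc_of {f g : ℝ → ℝ} (hf : ∀ t, HasDerivAt f (g t) t) {a b : ℝ}
    (h : ∀ t ∈ Ioo a b, 0 ≤ g t) : MonotoneOn f (Icc a b) := by
  apply monotoneOn_of_deriv_nonneg (convex_Icc a b)
    (fun t _ => (hf t).continuousAt.continuousWithinAt)
    (fun t _ => (hf t).differentiableAt.differentiableWithinAt)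
  rw [interior_Icc]
  intro x hx
  rw [(hf x).deriv]
  exact h x hx

end Calc


section Exit

variable {M₁ M₂ : ℝ → ℝ}

theorem exit_NE (hε₁ : 0 < ε₁) (hε₂ : 0 < ε₂) (hγ₁ : 0 < γ₁) (hγ₂ : 0 < γ₂)
    (hd₁ : ∀ t, HasDerivAt M₁ (M₁ t * (ε₁ - γ₁ * M₂ t)) t)
    (hd₂ : ∀ t, HasDerivAt M₂ (-(M₂ t) * (ε₂ - γ₂ * M₁ t)) t)
    (hpos : ∀ t, 0 < M₁ t ∧ 0 < M₂ t)
    {t₀ : ℝ} (hu : ε₂ / γ₂ < M₁ t₀) (hv : ε₁ / γ₁ ≤ M₂ t₀) :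
    ∃ t₁ > t₀, M₁ t₁ = ε₂ / γ₂ ∧ ε₁ / γ₁ < M₂ t₁ := by
  set p := ε₂ / γ₂ with hp
  set q := ε₁ / γ₁ with hq
  have hppos : 0 < p := div_pos hε₂ hγ₂
  have hqpos : 0 < q := div_pos hε₁ hγ₁
  have hM₁c : Continuous M₁ := continuous_iff_continuousAt.2 fun t => (hd₁ t).continuousAt
  have hv'pos : ∀ t, p < M₁ t → 0 < -(M₂ t) * (ε₂ - γ₂ * M₁ t) := by
    intro t h
    have h1 : ε₂ < M₁ t * γ₂ := (div_lt_iff₀ hγ₂).1 h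
    nlinarith [(hpos t).2]
  have hSne : {t : ℝ | t₀ ≤ t ∧ M₁ t ≤ p}.Nonempty := by
    by_contra hno
    have hno' : ∀ t, t₀ ≤ t → p < M₁ t := by
      intro t ht
      by_contra hle
      exact hno ⟨t, ht, le_of_not_gt hle⟩
    have hvmono : ∀ x : ℝ, StrictMonoOn M₂ (Icc t₀ x) := fun x =>
      strictMonoOn_Icc_of hd₂ (fun t ht => hv'pos t (hno' t ht.1.le))
    set v₁ := M₂ (t₀ + 1) with hv₁def
    have hv₁ : M₂ t₀ < v₁ :=
      hvmono (t₀ + 1) ⟨le_rfl, by linarith⟩ ⟨by linarith, le_rfl⟩ (by linarith)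
    have hqv₁ : q < v₁ := lt_of_le_of_lt hv hv₁
    have hvge : ∀ t, t₀ + 1 ≤ t → v₁ ≤ M₂ t := fun t ht =>
      (hvmono t).monotoneOn ⟨by linarith, ht⟩ ⟨by linarith, le_rfl⟩ ht
    set c := γ₁ * p * (v₁ - q) with hcdef
    have hcpos : 0 < c := by
      apply mul_pos (mul_pos hγ₁ hppos)
      linarith
    set x := t₀ + 1 + (M₁ (t₀ + 1) - p) / c + 1 with hxdef
    have hx1 : t₀ + 1 ≤ x := by
      have h0 : 0 ≤ (M₁ (t₀ + 1) - p) / c :=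
        div_nonneg (by linarith [hno' (t₀ + 1) (by linarith)]) hcpos.le
      rw [hxdef]
      linarith
    have hdec : M₁ x ≤ M₁ (t₀ + 1) - c * (x - (t₀ + 1)) := by
      apply le_sub_of_deriv_le hd₁ hx1
      intro t ht
      have htge : t₀ + 1 ≤ t := ht.1.le
      have hvt : v₁ ≤ M₂ t := hvge t htge
      have hut : p < M₁ t := hno' t (by linarith)
      have hεq : ε₁ = γ₁ * q := by
        rw [hq]
        field_simp
      have h1 : ε₁ - γ₁ * M₂ t ≤ γ₁ * (q - v₁) := by nlinarith
      have h2 : γ₁ * (q - v₁) < 0 := by nlinarith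
      nlinarith [mul_nonpos_of_nonneg_of_nonpos (by linarith : (0:ℝ) ≤ M₁ t - p)
          (by linarith : ε₁ - γ₁ * M₂ t ≤ 0),
        mul_le_mul_of_nonneg_left h1 hppos.le]
    have hxe : x - (t₀ + 1) = (M₁ (t₀ + 1) - p) / c + 1 := by
      rw [hxdef]
      ring
    have hdiv : c * ((M₁ (t₀ + 1) - p) / c) = M₁ (t₀ + 1) - p := mul_div_cancel₀ _ hcpos.ne'
    rw [hxe, mul_add, hdiv, mul_one] at hdec
    have := hno' x (by linarith)
    linarith
  set S := {t : ℝ | t₀ ≤ t ∧ M₁ t ≤ p} with hSdef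
  have hbdd : BddBelow S := ⟨t₀, fun z hz => hz.1⟩
  have hScl : IsClosed S := by
    rw [hSdef, setOf_and]
    exact (isClosed_le continuous_const continuous_id).inter
      (isClosed_le hM₁c continuous_const)
  set t₁ := sInf S with ht₁def
  have ht₁S : t₁ ∈ S := hScl.csInf_mem hSne hbdd
  have hlt : ∀ t ∈ Ico t₀ t₁, p < M₁ t := by
    intro t ht
    by_contra hle
    exact absurd (csInf_le hbdd ⟨ht.1, le_of_not_gt hle⟩) (not_le.2 ht.2)
  have ht₀t₁ : t₀ < t₁ := by
    rcases lt_or_eq_of_le ht₁S.1 with h | h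
    · exact h
    · exfalso
      have := ht₁S.2
      rw [← h] at this
      linarith
  have hMt₁ : M₁ t₁ = p := by
    rcases eq_or_lt_of_le ht₁S.2 with h | h
    · exact h
    · exfalso
      obtain ⟨z, hz, hzp⟩ := intermediate_value_Ioo' (le_of_lt ht₀t₁)
        hM₁c.continuousOn (⟨h, hu⟩ : p ∈ Ioo (M₁ t₁) (M₁ t₀))
      exact absurd hzp (ne_of_gt (hlt z ⟨hz.1.le, hz.2⟩))
  have hvt₁ : q < M₂ t₁ :=
    lt_of_le_of_lt hv
      ((strictMonoOn_Icc_of hd₂ (fun t ht => hv'pos t (hlt t ⟨ht.1.le, ht.2⟩)))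
        ⟨le_rfl, ht₀t₁.le⟩ ⟨ht₀t₁.le, le_rfl⟩ ht₀t₁)
  exact ⟨t₁, ht₀t₁, hMt₁, hvt₁⟩

theorem exit_SE (hε₁ : 0 < ε₁) (hε₂ : 0 < ε₂) (hγ₁ : 0 < γ₁) (hγ₂ : 0 < γ₂)
    (hd₁ : ∀ t, HasDerivAt M₁ (M₁ t * (ε₁ - γ₁ * M₂ t)) t)
    (hd₂ : ∀ t, HasDerivAt M₂ (-(M₂ t) * (ε₂ - γ₂ * M₁ t)) t)
    (hpos : ∀ t, 0 < M₁ t ∧ 0 < M₂ t)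
    {t₀ : ℝ} (hu : ε₂ / γ₂ ≤ M₁ t₀) (hv : M₂ t₀ < ε₁ / γ₁) :
    ∃ t₁ > t₀, M₂ t₁ = ε₁ / γ₁ ∧ ε₂ / γ₂ < M₁ t₁ := by
  set p := ε₂ / γ₂ with hp
  set q := ε₁ / γ₁ with hq
  have hppos : 0 < p := div_pos hε₂ hγ₂
  have hqpos : 0 < q := div_pos hε₁ hγ₁
  have hεq₂ : ε₂ = γ₂ * p := by rw [hp]; field_simp
  have hεq₁ : ε₁ = γ₁ * q := by rw [hq]; field_simp
  have hM₂c : Continuous M₂ := continuous_iff_continuousAt.2 fun t => (hd₂ t).continuousAt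
  have hu'pos : ∀ t, M₂ t < q → 0 < M₁ t * (ε₁ - γ₁ * M₂ t) := by
    intro t h
    have h1 : M₂ t * γ₁ < ε₁ := (lt_div_iff₀ hγ₁).1 h
    nlinarith [(hpos t).1]
  have hSne : {t : ℝ | t₀ ≤ t ∧ q ≤ M₂ t}.Nonempty := by
    by_contra hno
    have hno' : ∀ t, t₀ ≤ t → M₂ t < q := by
      intro t ht
      by_contra hle
      exact hno ⟨t, ht, le_of_not_gt hle⟩
    have humono : ∀ x : ℝ, StrictMonoOn M₁ (Icc t₀ x) := fun x =>
      strictMonoOn_Icc_of hd₁ (fun t ht => hu'pos t (hno' t ht.1.le))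
    set u₁ := M₁ (t₀ + 1) with hu₁def
    have hu₁ : M₁ t₀ < u₁ :=
      humono (t₀ + 1) ⟨le_rfl, by linarith⟩ ⟨by linarith, le_rfl⟩ (by linarith)
    have hpu₁ : p < u₁ := lt_of_le_of_lt hu hu₁
    have huge : ∀ t, t₀ + 1 ≤ t → u₁ ≤ M₁ t := fun t ht =>
      (humono t).monotoneOn ⟨by linarith, ht⟩ ⟨by linarith, le_rfl⟩ ht
    set v₂ := M₂ (t₀ + 1) with hv₂def
    have hv₂pos : 0 < v₂ := (hpos (t₀ + 1)).2
    have hvmono : MonotoneOn M₂ (Icc t₀ (t₀ + 1)) := by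
      apply monotoneOn_Icc_of hd₂
      intro t ht
      have hut : p ≤ M₁ t := le_trans hu
        ((humono (t₀+1)).monotoneOn ⟨le_rfl, by linarith⟩
          ⟨ht.1.le, by linarith [ht.2]⟩ ht.1.le)
      have he : -(M₂ t) * (ε₂ - γ₂ * M₁ t) = γ₂ * M₂ t * (M₁ t - p) := by
        rw [hεq₂]; ring
      rw [he]
      exact mul_nonneg (mul_nonneg hγ₂.le (hpos t).2.le) (by linarith)
    have hvge : ∀ t, t₀ + 1 ≤ t → v₂ ≤ M₂ t := by
      intro t ht
      have hmono : MonotoneOn M₂ (Icc (t₀ + 1) t) := by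
        apply monotoneOn_Icc_of hd₂
        intro z hz
        have huz : p ≤ M₁ z := le_trans hpu₁.le (huge z hz.1.le)
        have he : -(M₂ z) * (ε₂ - γ₂ * M₁ z) = γ₂ * M₂ z * (M₁ z - p) := by
          rw [hεq₂]; ring
        rw [he]
        exact mul_nonneg (mul_nonneg hγ₂.le (hpos z).2.le) (by linarith)
      exact hmono ⟨le_rfl, ht⟩ ⟨ht, le_rfl⟩ ht
    set c := γ₂ * v₂ * (u₁ - p) with hcdef
    have hcpos : 0 < c := by
      apply mul_pos (mul_pos hγ₂ hv₂pos)
      linarith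
    set x := t₀ + 1 + (q - v₂) / c + 1 with hxdef
    have hx1 : t₀ + 1 ≤ x := by
      have h0 : 0 ≤ (q - v₂) / c :=
        div_nonneg (by linarith [hno' (t₀ + 1) (by linarith)]) hcpos.le
      rw [hxdef]
      linarith
    have hgro : M₂ (t₀ + 1) + c * (x - (t₀ + 1)) ≤ M₂ x := by
      apply sub_le_of_deriv_ge hd₂ hx1
      intro t ht
      have hvt : v₂ ≤ M₂ t := hvge t ht.1.le
      have hut : u₁ ≤ M₁ t := huge t ht.1.le
      have e3 : -(M₂ t) * (ε₂ - γ₂ * M₁ t) = γ₂ * M₂ t * (M₁ t - p) := by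
        rw [hεq₂]; ring
      have e1 : γ₂ * v₂ * (u₁ - p) ≤ γ₂ * M₂ t * (u₁ - p) := by nlinarith
      have e2 : γ₂ * M₂ t * (u₁ - p) ≤ γ₂ * M₂ t * (M₁ t - p) := by
        nlinarith [(hpos t).2]
      rw [e3]
      linarith
    have hxe : x - (t₀ + 1) = (q - v₂) / c + 1 := by rw [hxdef]; ring
    have hdiv : c * ((q - v₂) / c) = q - v₂ := mul_div_cancel₀ _ hcpos.ne'
    rw [hxe, mul_add, hdiv, mul_one] at hgro
    have := hno' x (by linarith)
    linarith
  set S := {t : ℝ | t₀ ≤ t ∧ q ≤ M₂ t} with hSdef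
  have hbdd : BddBelow S := ⟨t₀, fun z hz => hz.1⟩
  have hScl : IsClosed S := by
    rw [hSdef, setOf_and]
    exact (isClosed_le continuous_const continuous_id).inter
      (isClosed_le continuous_const hM₂c)
  set t₁ := sInf S with ht₁def
  have ht₁S : t₁ ∈ S := hScl.csInf_mem hSne hbdd
  have hlt : ∀ t ∈ Ico t₀ t₁, M₂ t < q := by
    intro t ht
    by_contra hle
    exact absurd (csInf_le hbdd ⟨ht.1, le_of_not_gt hle⟩) (not_le.2 ht.2)
  have ht₀t₁ : t₀ < t₁ := by
    rcases lt_or_eq_of_le ht₁S.1 with h | h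
    · exact h
    · exfalso
      have := ht₁S.2
      rw [← h] at this
      linarith
  have hMt₁ : M₂ t₁ = q := by
    rcases eq_or_lt_of_le ht₁S.2 with h | h
    · exact h.symm
    · exfalso
      obtain ⟨z, hz, hzp⟩ := intermediate_value_Ioo (le_of_lt ht₀t₁)
        hM₂c.continuousOn (⟨hv, h⟩ : q ∈ Ioo (M₂ t₀) (M₂ t₁))
      exact absurd hzp (ne_of_lt (hlt z ⟨hz.1.le, hz.2⟩))
  have hut₁ : p < M₁ t₁ :=
    lt_of_le_of_lt hu
      ((strictMonoOn_Icc_of hd₁ (fun t ht => hu'pos t (hlt t ⟨ht.1.le, ht.2⟩)))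
        ⟨le_rfl, ht₀t₁.le⟩ ⟨ht₀t₁.le, le_rfl⟩ ht₀t₁)
  exact ⟨t₁, ht₀t₁, hMt₁, hut₁⟩

theorem exit_NW (hε₁ : 0 < ε₁) (hε₂ : 0 < ε₂) (hγ₁ : 0 < γ₁) (hγ₂ : 0 < γ₂)
    (hd₁ : ∀ t, HasDerivAt M₁ (M₁ t * (ε₁ - γ₁ * M₂ t)) t)
    (hd₂ : ∀ t, HasDerivAt M₂ (-(M₂ t) * (ε₂ - γ₂ * M₁ t)) t)
    (hpos : ∀ t, 0 < M₁ t ∧ 0 < M₂ t)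
    {t₀ : ℝ} (hu : M₁ t₀ ≤ ε₂ / γ₂) (hv : ε₁ / γ₁ < M₂ t₀) :
    ∃ t₁ > t₀, M₂ t₁ = ε₁ / γ₁ ∧ M₁ t₁ < ε₂ / γ₂ := by
  set p := ε₂ / γ₂ with hp
  set q := ε₁ / γ₁ with hq
  have hppos : 0 < p := div_pos hε₂ hγ₂
  have hqpos : 0 < q := div_pos hε₁ hγ₁
  have hεq₂ : ε₂ = γ₂ * p := by rw [hp]; field_simp
  have hεq₁ : ε₁ = γ₁ * q := by rw [hq]; field_simp
  have hM₂c : Continuous M₂ := continuous_iff_continuousAt.2 fun t => (hd₂ t).continuousAt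
  have hu'neg : ∀ t, q < M₂ t → M₁ t * (ε₁ - γ₁ * M₂ t) < 0 := by
    intro t h
    have h1 : ε₁ < M₂ t * γ₁ := (div_lt_iff₀ hγ₁).1 h
    nlinarith [(hpos t).1]
  have hSne : {t : ℝ | t₀ ≤ t ∧ M₂ t ≤ q}.Nonempty := by
    by_contra hno
    have hno' : ∀ t, t₀ ≤ t → q < M₂ t := by
      intro t ht
      by_contra hle
      exact hno ⟨t, ht, le_of_not_gt hle⟩
    have huanti : ∀ x : ℝ, StrictAntiOn M₁ (Icc t₀ x) := fun x =>
      strictAntiOn_Icc_of hd₁ (fun t ht => hu'neg t (hno' t ht.1.le))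
    set u₁ := M₁ (t₀ + 1) with hu₁def
    have hu₁ : u₁ < M₁ t₀ :=
      huanti (t₀ + 1) ⟨le_rfl, by linarith⟩ ⟨by linarith, le_rfl⟩ (by linarith)
    have hu₁p : u₁ < p := lt_of_lt_of_le hu₁ hu
    have hule : ∀ t, t₀ + 1 ≤ t → M₁ t ≤ u₁ := fun t ht =>
      (huanti t).antitoneOn ⟨by linarith, ht⟩ ⟨by linarith, le_rfl⟩ ht
    set c := γ₂ * q * (p - u₁) with hcdef
    have hcpos : 0 < c := by
      apply mul_pos (mul_pos hγ₂ hqpos)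
      linarith
    set x := t₀ + 1 + (M₂ (t₀ + 1) - q) / c + 1 with hxdef
    have hx1 : t₀ + 1 ≤ x := by
      have h0 : 0 ≤ (M₂ (t₀ + 1) - q) / c :=
        div_nonneg (by linarith [hno' (t₀ + 1) (by linarith)]) hcpos.le
      rw [hxdef]
      linarith
    have hdec : M₂ x ≤ M₂ (t₀ + 1) - c * (x - (t₀ + 1)) := by
      apply le_sub_of_deriv_le hd₂ hx1
      intro t ht
      have hvt : q < M₂ t := hno' t (by linarith [ht.1])
      have hut : M₁ t ≤ u₁ := hule t ht.1.le
      have e3 : -(M₂ t) * (ε₂ - γ₂ * M₁ t) = γ₂ * M₂ t * (M₁ t - p) := by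
        rw [hεq₂]; ring
      have e1 : γ₂ * M₂ t * (M₁ t - p) ≤ γ₂ * q * (M₁ t - p) := by
        nlinarith [mul_nonneg (by linarith : (0:ℝ) ≤ M₂ t - q)
          (by linarith : (0:ℝ) ≤ p - M₁ t)]
      have e2 : γ₂ * q * (M₁ t - p) ≤ γ₂ * q * (u₁ - p) := by nlinarith
      rw [e3]
      have : γ₂ * q * (u₁ - p) = -c := by rw [hcdef]; ring
      linarith
    have hxe : x - (t₀ + 1) = (M₂ (t₀ + 1) - q) / c + 1 := by rw [hxdef]; ring
    have hdiv : c * ((M₂ (t₀ + 1) - q) / c) = M₂ (t₀ + 1) - q := mul_div_cancel₀ _ hcpos.ne'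
    rw [hxe, mul_add, hdiv, mul_one] at hdec
    have := hno' x (by linarith)
    linarith
  set S := {t : ℝ | t₀ ≤ t ∧ M₂ t ≤ q} with hSdef
  have hbdd : BddBelow S := ⟨t₀, fun z hz => hz.1⟩
  have hScl : IsClosed S := by
    rw [hSdef, setOf_and]
    exact (isClosed_le continuous_const continuous_id).inter
      (isClosed_le hM₂c continuous_const)
  set t₁ := sInf S with ht₁def
  have ht₁S : t₁ ∈ S := hScl.csInf_mem hSne hbdd
  have hlt : ∀ t ∈ Ico t₀ t₁, q < M₂ t := by
    intro t ht
    by_contra hle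
    exact absurd (csInf_le hbdd ⟨ht.1, le_of_not_gt hle⟩) (not_le.2 ht.2)
  have ht₀t₁ : t₀ < t₁ := by
    rcases lt_or_eq_of_le ht₁S.1 with h | h
    · exact h
    · exfalso
      have := ht₁S.2
      rw [← h] at this
      linarith
  have hMt₁ : M₂ t₁ = q := by
    rcases eq_or_lt_of_le ht₁S.2 with h | h
    · exact h
    · exfalso
      obtain ⟨z, hz, hzp⟩ := intermediate_value_Ioo' (le_of_lt ht₀t₁)
        hM₂c.continuousOn (⟨h, hv⟩ : q ∈ Ioo (M₂ t₁) (M₂ t₀))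
      exact absurd hzp (ne_of_gt (hlt z ⟨hz.1.le, hz.2⟩))
  have hut₁ : M₁ t₁ < p :=
    lt_of_lt_of_le
      ((strictAntiOn_Icc_of hd₁ (fun t ht => hu'neg t (hlt t ⟨ht.1.le, ht.2⟩)))
        ⟨le_rfl, ht₀t₁.le⟩ ⟨ht₀t₁.le, le_rfl⟩ ht₀t₁) hu
  exact ⟨t₁, ht₀t₁, hMt₁, hut₁⟩

theorem exit_SW (hε₁ : 0 < ε₁) (hε₂ : 0 < ε₂) (hγ₁ : 0 < γ₁) (hγ₂ : 0 < γ₂)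
    (hd₁ : ∀ t, HasDerivAt M₁ (M₁ t * (ε₁ - γ₁ * M₂ t)) t)
    (hd₂ : ∀ t, HasDerivAt M₂ (-(M₂ t) * (ε₂ - γ₂ * M₁ t)) t)
    (hpos : ∀ t, 0 < M₁ t ∧ 0 < M₂ t)
    {t₀ : ℝ} (hu : M₁ t₀ < ε₂ / γ₂) (hv : M₂ t₀ ≤ ε₁ / γ₁) :
    ∃ t₁ > t₀, M₁ t₁ = ε₂ / γ₂ ∧ M₂ t₁ < ε₁ / γ₁ := by
  set p := ε₂ / γ₂ with hp
  set q := ε₁ / γ₁ with hq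
  have hppos : 0 < p := div_pos hε₂ hγ₂
  have hqpos : 0 < q := div_pos hε₁ hγ₁
  have hεq₂ : ε₂ = γ₂ * p := by rw [hp]; field_simp
  have hεq₁ : ε₁ = γ₁ * q := by rw [hq]; field_simp
  have hM₁c : Continuous M₁ := continuous_iff_continuousAt.2 fun t => (hd₁ t).continuousAt
  have hv'neg : ∀ t, M₁ t < p → -(M₂ t) * (ε₂ - γ₂ * M₁ t) < 0 := by
    intro t h
    have h1 : M₁ t * γ₂ < ε₂ := (lt_div_iff₀ hγ₂).1 h
    nlinarith [(hpos t).2]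
  have hSne : {t : ℝ | t₀ ≤ t ∧ p ≤ M₁ t}.Nonempty := by
    by_contra hno
    have hno' : ∀ t, t₀ ≤ t → M₁ t < p := by
      intro t ht
      by_contra hle
      exact hno ⟨t, ht, le_of_not_gt hle⟩
    have hvanti : ∀ x : ℝ, StrictAntiOn M₂ (Icc t₀ x) := fun x =>
      strictAntiOn_Icc_of hd₂ (fun t ht => hv'neg t (hno' t ht.1.le))
    set v₁ := M₂ (t₀ + 1) with hv₁def
    have hv₁ : v₁ < M₂ t₀ :=
      hvanti (t₀ + 1) ⟨le_rfl, by linarith⟩ ⟨by linarith, le_rfl⟩ (by linarith)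
    have hv₁q : v₁ < q := lt_of_lt_of_le hv₁ hv
    have hvle : ∀ t, t₀ + 1 ≤ t → M₂ t ≤ v₁ := fun t ht =>
      (hvanti t).antitoneOn ⟨by linarith, ht⟩ ⟨by linarith, le_rfl⟩ ht
    set u₁ := M₁ (t₀ + 1) with hu₁def
    have hu₁pos : 0 < u₁ := (hpos (t₀ + 1)).1
    have huge : ∀ t, t₀ + 1 ≤ t → u₁ ≤ M₁ t := by
      intro t ht
      have hmono : MonotoneOn M₁ (Icc (t₀ + 1) t) := by
        apply monotoneOn_Icc_of hd₁
        intro z hz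
        have hvz : M₂ z ≤ v₁ := hvle z hz.1.le
        have he : M₁ z * (ε₁ - γ₁ * M₂ z) = γ₁ * M₁ z * (q - M₂ z) := by
          rw [hεq₁]; ring
        rw [he]
        exact mul_nonneg (mul_nonneg hγ₁.le (hpos z).1.le) (by linarith)
      exact hmono ⟨le_rfl, ht⟩ ⟨ht, le_rfl⟩ ht
    set c := γ₁ * u₁ * (q - v₁) with hcdef
    have hcpos : 0 < c := by
      apply mul_pos (mul_pos hγ₁ hu₁pos)
      linarith
    set x := t₀ + 1 + (p - u₁) / c + 1 with hxdef
    have hx1 : t₀ + 1 ≤ x := by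
      have h0 : 0 ≤ (p - u₁) / c :=
        div_nonneg (by linarith [hno' (t₀ + 1) (by linarith)]) hcpos.le
      rw [hxdef]
      linarith
    have hgro : M₁ (t₀ + 1) + c * (x - (t₀ + 1)) ≤ M₁ x := by
      apply sub_le_of_deriv_ge hd₁ hx1
      intro t ht
      have hvt : M₂ t ≤ v₁ := hvle t ht.1.le
      have hut : u₁ ≤ M₁ t := huge t ht.1.le
      have e3 : M₁ t * (ε₁ - γ₁ * M₂ t) = γ₁ * M₁ t * (q - M₂ t) := by
        rw [hεq₁]; ring
      have e1 : γ₁ * u₁ * (q - v₁) ≤ γ₁ * M₁ t * (q - v₁) := by nlinarith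
      have e2 : γ₁ * M₁ t * (q - v₁) ≤ γ₁ * M₁ t * (q - M₂ t) := by
        nlinarith [(hpos t).1]
      rw [e3]
      linarith
    have hxe : x - (t₀ + 1) = (p - u₁) / c + 1 := by rw [hxdef]; ring
    have hdiv : c * ((p - u₁) / c) = p - u₁ := mul_div_cancel₀ _ hcpos.ne'
    rw [hxe, mul_add, hdiv, mul_one] at hgro
    have := hno' x (by linarith)
    linarith
  set S := {t : ℝ | t₀ ≤ t ∧ p ≤ M₁ t} with hSdef
  have hbdd : BddBelow S := ⟨t₀, fun z hz => hz.1⟩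
  have hScl : IsClosed S := by
    rw [hSdef, setOf_and]
    exact (isClosed_le continuous_const continuous_id).inter
      (isClosed_le continuous_const hM₁c)
  set t₁ := sInf S with ht₁def
  have ht₁S : t₁ ∈ S := hScl.csInf_mem hSne hbdd
  have hlt : ∀ t ∈ Ico t₀ t₁, M₁ t < p := by
    intro t ht
    by_contra hle
    exact absurd (csInf_le hbdd ⟨ht.1, le_of_not_gt hle⟩) (not_le.2 ht.2)
  have ht₀t₁ : t₀ < t₁ := by
    rcases lt_or_eq_of_le ht₁S.1 with h | h
    · exact h
    · exfalso
      have := ht₁S.2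
      rw [← h] at this
      linarith
  have hMt₁ : M₁ t₁ = p := by
    rcases eq_or_lt_of_le ht₁S.2 with h | h
    · exact h.symm
    · exfalso
      obtain ⟨z, hz, hzp⟩ := intermediate_value_Ioo (le_of_lt ht₀t₁)
        hM₁c.continuousOn (⟨hu, h⟩ : p ∈ Ioo (M₁ t₀) (M₁ t₁))
      exact absurd hzp (ne_of_lt (hlt z ⟨hz.1.le, hz.2⟩))
  have hvt₁ : M₂ t₁ < q :=
    lt_of_lt_of_le
      ((strictAntiOn_Icc_of hd₂ (fun t ht => hv'neg t (hlt t ⟨ht.1.le, ht.2⟩)))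
        ⟨le_rfl, ht₀t₁.le⟩ ⟨ht₀t₁.le, le_rfl⟩ ht₀t₁) hv
  exact ⟨t₁, ht₀t₁, hMt₁, hvt₁⟩

/-- From any time, the solution later hits the north ray `{M₁ = p, M₂ > q}`. -/
theorem reach_north (hε₁ : 0 < ε₁) (hε₂ : 0 < ε₂) (hγ₁ : 0 < γ₁) (hγ₂ : 0 < γ₂)
    (hd₁ : ∀ t, HasDerivAt M₁ (M₁ t * (ε₁ - γ₁ * M₂ t)) t)
    (hd₂ : ∀ t, HasDerivAt M₂ (-(M₂ t) * (ε₂ - γ₂ * M₁ t)) t)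
    (hpos : ∀ t, 0 < M₁ t ∧ 0 < M₂ t)
    (hne : ∀ t, (M₁ t, M₂ t) ≠ (ε₂ / γ₂, ε₁ / γ₁))
    (t₀ : ℝ) : ∃ t₁ > t₀, M₁ t₁ = ε₂ / γ₂ ∧ ε₁ / γ₁ < M₂ t₁ := by
  have hNE := fun {s} hu hv => exit_NE hε₁ hε₂ hγ₁ hγ₂ hd₁ hd₂ hpos (t₀ := s) hu hv
  have hSE := fun {s} hu hv => exit_SE hε₁ hε₂ hγ₁ hγ₂ hd₁ hd₂ hpos (t₀ := s) hu hv
  have hNW := fun {s} hu hv => exit_NW hε₁ hε₂ hγ₁ hγ₂ hd₁ hd₂ hpos (t₀ := s) hu hv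
  have hSW := fun {s} hu hv => exit_SW hε₁ hε₂ hγ₁ hγ₂ hd₁ hd₂ hpos (t₀ := s) hu hv
  -- from the south ray / SE region we can finish
  have fromSE : ∀ s : ℝ, ε₂ / γ₂ ≤ M₁ s → M₂ s < ε₁ / γ₁ →
      ∃ t₁ > s, M₁ t₁ = ε₂ / γ₂ ∧ ε₁ / γ₁ < M₂ t₁ := by
    intro s hu hv
    obtain ⟨s₁, hs₁, he1, he2⟩ := hSE hu hv
    obtain ⟨t₁, ht₁, hf1, hf2⟩ := hNE he2 he1.ge
    exact ⟨t₁, lt_trans hs₁ ht₁, hf1, hf2⟩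
  have fromSW : ∀ s : ℝ, M₁ s < ε₂ / γ₂ → M₂ s ≤ ε₁ / γ₁ →
      ∃ t₁ > s, M₁ t₁ = ε₂ / γ₂ ∧ ε₁ / γ₁ < M₂ t₁ := by
    intro s hu hv
    obtain ⟨s₁, hs₁, he1, he2⟩ := hSW hu hv
    obtain ⟨t₁, ht₁, hf1, hf2⟩ := fromSE s₁ he1.ge he2
    exact ⟨t₁, lt_trans hs₁ ht₁, hf1, hf2⟩
  rcases lt_trichotomy (M₁ t₀) (ε₂ / γ₂) with hu | hu | hu
  · rcases le_or_gt (M₂ t₀) (ε₁ / γ₁) with hv | hv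
    · exact fromSW t₀ hu hv
    · obtain ⟨s₁, hs₁, he1, he2⟩ := hNW hu.le hv
      obtain ⟨t₁, ht₁, hf1, hf2⟩ := fromSW s₁ he2 he1.le
      exact ⟨t₁, lt_trans hs₁ ht₁, hf1, hf2⟩
  · rcases lt_trichotomy (M₂ t₀) (ε₁ / γ₁) with hv | hv | hv
    · exact fromSE t₀ hu.ge hv
    · exact absurd (Prod.ext hu hv) (hne t₀)
    · obtain ⟨s₁, hs₁, he1, he2⟩ := hNW hu.le hv
      obtain ⟨t₁, ht₁, hf1, hf2⟩ := fromSW s₁ he2 he1.le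
      exact ⟨t₁, lt_trans hs₁ ht₁, hf1, hf2⟩
  · rcases lt_or_ge (M₂ t₀) (ε₁ / γ₁) with hv | hv
    · exact fromSE t₀ hu.le hv
    · obtain ⟨t₁, ht₁, hf1, hf2⟩ := hNE hu hv
      exact ⟨t₁, ht₁, hf1, hf2⟩

end Exit

end Volterra

/-- Volterra's law of the periodic cycle: every nonconstant maximal solution
of the predator-prey system starting in the open positive quadrant is defined
for all time and is periodic. Formally: any solution defined on an open
connected set containing 0, with positive non-equilibrium initial data,
extends to a solution defined on all of ℝ which is periodic. -/
theorem volterra_periodic_cycle (ε₁ ε₂ γ₁ γ₂ : ℝ)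
    (hε₁ : 0 < ε₁) (hε₂ : 0 < ε₂) (hγ₁ : 0 < γ₁) (hγ₂ : 0 < γ₂)
    (s : Set ℝ) (hs : IsOpen s) (hconn : IsConnected s) (h0s : (0 : ℝ) ∈ s)
    (N₁ N₂ : ℝ → ℝ)
    (hode₁ : ∀ t ∈ s, HasDerivAt N₁ (N₁ t * (ε₁ - γ₁ * N₂ t)) t)
    (hode₂ : ∀ t ∈ s, HasDerivAt N₂ (-(N₂ t) * (ε₂ - γ₂ * N₁ t)) t)
    (h1 : 0 < N₁ 0) (h2 : 0 < N₂ 0)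
    (hneq : (N₁ 0, N₂ 0) ≠ (ε₂ / γ₂, ε₁ / γ₁)) :
    ∃ M₁ M₂ : ℝ → ℝ,
      (∀ t ∈ s, M₁ t = N₁ t ∧ M₂ t = N₂ t) ∧
      (∀ t, HasDerivAt M₁ (M₁ t * (ε₁ - γ₁ * M₂ t)) t) ∧
      (∀ t, HasDerivAt M₂ (-(M₂ t) * (ε₂ - γ₂ * M₁ t)) t) ∧
      ∃ T > 0, ∀ t, M₁ (t + T) = M₁ t ∧ M₂ (t + T) = M₂ t := by
  classical
  open Volterra Set in
  obtain ⟨M, hM0, hMd, hMinv⟩ :=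
    Volterra.global_solution hε₁ hε₂ hγ₁ hγ₂ (N₁ 0, N₂ 0) h1 h2
  have hd₁ : ∀ t, HasDerivAt (fun t => (M t).1) ((M t).1 * (ε₁ - γ₁ * (M t).2)) t := by
    intro t
    have := (hasFDerivAt_fst (𝕜 := ℝ) (p := M t)).comp_hasDerivAt t (hMd t)
    simpa [Volterra.vf, Function.comp_def] using this
  have hd₂ : ∀ t, HasDerivAt (fun t => (M t).2) (-(M t).2 * (ε₂ - γ₂ * (M t).1)) t := by
    intro t
    have := (hasFDerivAt_snd (𝕜 := ℝ) (p := M t)).comp_hasDerivAt t (hMd t)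
    simpa [Volterra.vf, Function.comp_def] using this
  have hpos : ∀ t, 0 < (M t).1 ∧ 0 < (M t).2 := fun t => ⟨(hMinv t).1, (hMinv t).2.1⟩
  -- agreement with the given solution on s
  have hagree : ∀ t ∈ s, M t = (N₁ t, N₂ t) := by
    have hNd : ∀ t ∈ s, HasDerivAt (fun t => (N₁ t, N₂ t))
        (Volterra.vf ε₁ ε₂ γ₁ γ₂ (N₁ t, N₂ t)) t := by
      intro t ht
      exact (hode₁ t ht).prodMk (hode₂ t ht)
    exact Volterra.eqOn_of_isOpen hs hconn.isPreconnected (fun t _ => hMd t) hNd h0s hM0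
  -- the strict minimum of the Hamiltonian
  have hstrict : Volterra.ham ε₁ ε₂ γ₁ γ₂ (ε₂ / γ₂, ε₁ / γ₁) <
      Volterra.ham ε₁ ε₂ γ₁ γ₂ (N₁ 0, N₂ 0) := by
    have hne0 : N₁ 0 ≠ ε₂ / γ₂ ∨ N₂ 0 ≠ ε₁ / γ₁ := by
      by_contra hcon
      push_neg at hcon
      exact hneq (Prod.ext hcon.1 hcon.2)
    have hle1 : γ₂ * (ε₂ / γ₂) - ε₂ * Real.log (ε₂ / γ₂) ≤
        γ₂ * (N₁ 0) - ε₂ * Real.log (N₁ 0) := sub_log_ge hε₂ hγ₂ h1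
    have hle2 : γ₁ * (ε₁ / γ₁) - ε₁ * Real.log (ε₁ / γ₁) ≤
        γ₁ * (N₂ 0) - ε₁ * Real.log (N₂ 0) := sub_log_ge hε₁ hγ₁ h2
    simp only [Volterra.ham]
    rcases hne0 with h | h
    · have := sub_log_gt hε₂ hγ₂ h1 h
      linarith
    · have := sub_log_gt hε₁ hγ₁ h2 h
      linarith
  have hnev : ∀ t : ℝ, ((M t).1, (M t).2) ≠ (ε₂ / γ₂, ε₁ / γ₁) := by
    intro t h
    rw [Prod.mk.injEq] at h
    have hMt : M t = (ε₂ / γ₂, ε₁ / γ₁) := Prod.ext h.1 h.2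
    have := (hMinv t).2.2
    rw [hMt] at this
    linarith
  -- two successive visits to the north ray
  obtain ⟨ta, hta, ha1, ha2⟩ := Volterra.reach_north hε₁ hε₂ hγ₁ hγ₂ hd₁ hd₂ hpos hnev 0
  obtain ⟨tb, htb, hb1, hb2⟩ := Volterra.reach_north hε₁ hε₂ hγ₁ hγ₂ hd₁ hd₂ hpos hnev ta
  -- they are at the same point
  have hsame : M ta = M tb := by
    have hham : Volterra.ham ε₁ ε₂ γ₁ γ₂ (M ta) = Volterra.ham ε₁ ε₂ γ₁ γ₂ (M tb) := by
      rw [(hMinv ta).2.2, (hMinv tb).2.2]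
    have hq : 0 < ε₁ / γ₁ := div_pos hε₁ hγ₁
    have hg : StrictMonoOn (fun b => γ₁ * b - ε₁ * Real.log b) (Ici (ε₁ / γ₁)) := by
      apply strictMonoOn_of_deriv_pos (convex_Ici _)
      · intro b hb
        have hb0 : 0 < b := lt_of_lt_of_le hq hb
        exact ((continuous_const.mul continuous_id).continuousAt.sub
          ((Real.continuousAt_log hb0.ne').const_mul ε₁)).continuousWithinAt
      · rw [interior_Ici]
        intro b hb
        have hb0 : 0 < b := lt_trans hq hb
        have hder : HasDerivAt (fun b => γ₁ * b - ε₁ * Real.log b) (γ₁ - ε₁ * b⁻¹) b := by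
          have h1' : HasDerivAt (fun b : ℝ => γ₁ * b) γ₁ b := by
            simpa using (hasDerivAt_id b).const_mul γ₁
          exact h1'.sub ((Real.hasDerivAt_log hb0.ne').const_mul ε₁)
        rw [hder.deriv]
        rw [mem_Ioi] at hb
        have hb' : ε₁ < b * γ₁ := (div_lt_iff₀ hγ₁).1 hb
        have key : ε₁ * b⁻¹ < γ₁ := by
          rw [← div_eq_mul_inv]
          rw [div_lt_iff₀ hb0]
          linarith
        linarith
    have hv : (M ta).2 = (M tb).2 := by
      apply hg.injOn (le_of_lt ha2) (le_of_lt hb2)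
      simp only [Volterra.ham] at hham
      simp only
      rw [ha1, hb1] at hham
      linarith
    exact Prod.ext (by rw [ha1, hb1]) hv
  refine ⟨fun t => (M t).1, fun t => (M t).2, ?_, hd₁, hd₂, tb - ta, by linarith, ?_⟩
  · intro t ht
    have h := hagree t ht
    constructor
    · show (M t).1 = N₁ t
      rw [h]
    · show (M t).2 = N₂ t
      rw [h]
  · -- periodicity from uniqueness on ℝ
    have hshift : ∀ t, HasDerivAt (fun t => M (t + (tb - ta)))
        (Volterra.vf ε₁ ε₂ γ₁ γ₂ (M (t + (tb - ta)))) t := by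
      intro t
      have h1' : HasDerivAt (fun t : ℝ => t + (tb - ta)) 1 t := by
        simpa using (hasDerivAt_id t).add_const (tb - ta)
      have := (hMd (t + (tb - ta))).scomp t h1'
      simpa [Function.comp_def] using this
    have hper : EqOn (fun t => M (t + (tb - ta))) M univ := by
      apply Volterra.eqOn_of_isOpen isOpen_univ isPreconnected_univ
        (fun t _ => hshift t) (fun t _ => hMd t) (mem_univ ta)
      show M (ta + (tb - ta)) = M ta
      rw [show ta + (tb - ta) = tb by ring]
      exact hsame.symm
    intro t
    have := hper (mem_univ t)
    simp only at this
    constructor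
    · show (M (t + (tb - ta))).1 = (M t).1
      rw [this]
    · show (M (t + (tb - ta))).2 = (M t).2
      rw [this]
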